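/- Let f : ℝ → ℝ be differentiable on an open interval containing [a,b] ⊆ [0,∞) with a < b, and suppose |f'| is s-convex in the second sense on [a,b] for some fixed s ∈ (0,1). Then |(f(a)+f(b))/2 - (1/(b-a)) ∫_a^b f(x) dx| ≤ ((b-a)/2) · (1/(s+1) + ((1/2)^s - 2)/((s+1)(s+2))) · (|f'(a)| + |f'(b)|). -/

import Mathlib

open intervalIntegral Real

lemma key_int (s : ℝ) (hs : 0 < s) :
    ∫ t in (0:ℝ)..1, |1 - 2*t| * t ^ s
      = ((1/2:ℝ) ^ s + s) / ((s+1)*(s+2)) := by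
  have h1 : (-1:ℝ) < s := by linarith
  have h2 : (-1:ℝ) < s + 1 := by linarith
  have hs1 : s + 1 ≠ 0 := by linarith
  have hs2 : s + 2 ≠ 0 := by linarith
  have hi1 : IntervalIntegrable (fun t : ℝ => t ^ s) MeasureTheory.volume 0 (1/2) :=
    intervalIntegrable_rpow' h1
  have hi1' : IntervalIntegrable (fun t : ℝ => t ^ (s+1)) MeasureTheory.volume 0 (1/2) :=
    intervalIntegrable_rpow' h2
  have hi2 : IntervalIntegrable (fun t : ℝ => t ^ s) MeasureTheory.volume (1/2) 1 :=
    intervalIntegrable_rpow' h1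
  have hi2' : IntervalIntegrable (fun t : ℝ => t ^ (s+1)) MeasureTheory.volume (1/2) 1 :=
    intervalIntegrable_rpow' h2
  have hrw : ∀ t : ℝ, 0 ≤ t → t ^ (s + 1) = t * t ^ s := by
    intro t ht
    rw [Real.rpow_add' ht hs1, Real.rpow_one]; ring
  have e1 : ∫ t in (0:ℝ)..(1/2), |1 - 2*t| * t ^ s
      = ∫ t in (0:ℝ)..(1/2), (t ^ s - 2 * t ^ (s+1)) := by
    apply intervalIntegral.integral_congr
    intro t ht
    rw [Set.uIcc_of_le (by norm_num : (0:ℝ) ≤ 1/2)] at ht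
    show |1 - 2*t| * t ^ s = t ^ s - 2 * t ^ (s+1)
    rw [abs_of_nonneg (by linarith [ht.2] : (0:ℝ) ≤ 1 - 2*t), hrw t ht.1]
    ring
  have e2 : ∫ t in (1/2:ℝ)..1, |1 - 2*t| * t ^ s
      = ∫ t in (1/2:ℝ)..1, (2 * t ^ (s+1) - t ^ s) := by
    apply intervalIntegral.integral_congr
    intro t ht
    rw [Set.uIcc_of_le (by norm_num : (1/2:ℝ) ≤ 1)] at ht
    show |1 - 2*t| * t ^ s = 2 * t ^ (s+1) - t ^ s
    rw [abs_of_nonpos (by linarith [ht.1] : (1:ℝ) - 2*t ≤ 0), hrw t (by linarith [ht.1])]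
    ring
  have hsplit : ∫ t in (0:ℝ)..1, |1 - 2*t| * t ^ s
      = (∫ t in (0:ℝ)..(1/2), |1 - 2*t| * t ^ s) + ∫ t in (1/2:ℝ)..1, |1 - 2*t| * t ^ s := by
    rw [intervalIntegral.integral_add_adjacent_intervals]
    · exact hi1.continuousOn_mul
        ((continuous_const.sub (continuous_const.mul continuous_id)).abs.continuousOn)
    · exact hi2.continuousOn_mul
        ((continuous_const.sub (continuous_const.mul continuous_id)).abs.continuousOn)
  have v1 : ∫ t in (0:ℝ)..(1/2), (t ^ s - 2 * t ^ (s+1))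
      = ((1/2:ℝ) ^ (s+1) - 0 ^ (s+1)) / (s+1) - 2 * (((1/2:ℝ) ^ (s+2) - 0 ^ (s+2)) / (s+2)) := by
    rw [intervalIntegral.integral_sub hi1 (hi1'.const_mul 2),
      intervalIntegral.integral_const_mul, integral_rpow (Or.inl h1), integral_rpow (Or.inl h2)]
    norm_num [show s + 1 + 1 = s + 2 by ring]
  have v2 : ∫ t in (1/2:ℝ)..1, (2 * t ^ (s+1) - t ^ s)
      = 2 * (((1:ℝ) ^ (s+2) - (1/2:ℝ) ^ (s+2)) / (s+2)) - ((1:ℝ) ^ (s+1) - (1/2:ℝ) ^ (s+1)) / (s+1) := by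
    rw [intervalIntegral.integral_sub (hi2'.const_mul 2) hi2,
      intervalIntegral.integral_const_mul, integral_rpow (Or.inl h1), integral_rpow (Or.inl h2)]
    norm_num [show s + 1 + 1 = s + 2 by ring]
  have hz1 : (0:ℝ) ^ (s+1) = 0 := Real.zero_rpow (by linarith)
  have hz2 : (0:ℝ) ^ (s+2) = 0 := Real.zero_rpow (by linarith)
  have hp1 : (1/2:ℝ) ^ (s+1) = (1/2:ℝ) ^ s * (1/2) := by
    rw [Real.rpow_add' (by norm_num) hs1, Real.rpow_one]
  have hp2 : (1/2:ℝ) ^ (s+2) = (1/2:ℝ) ^ s * (1/4) := by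
    rw [Real.rpow_add' (by norm_num) hs2,
      show (2:ℝ) = ((2:ℕ):ℝ) by norm_num, Real.rpow_natCast]
    norm_num
  rw [hsplit, e1, e2, v1, v2, hz1, hz2, Real.one_rpow, Real.one_rpow, hp1, hp2]
  field_simp
  ring

lemma key_int' (s : ℝ) (hs : 0 < s) :
    ∫ t in (0:ℝ)..1, |1 - 2*t| * (1 - t) ^ s
      = ((1/2:ℝ) ^ s + s) / ((s+1)*(s+2)) := by
  have := intervalIntegral.integral_comp_sub_left
    (fun t : ℝ => |1 - 2*t| * t ^ s) (a := 0) (b := 1) 1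
  simp only [sub_zero, sub_self] at this
  rw [← key_int s hs, ← this]
  apply intervalIntegral.integral_congr
  intro t _
  show |1 - 2*t| * (1-t) ^ s = |1 - 2*(1-t)| * (1-t) ^ s
  rw [show (1:ℝ) - 2*(1-t) = -(1 - 2*t) by ring, abs_neg]

theorem sconvex_trapezoid_bound_q_one
    (s a b c d : ℝ) (hs : s ∈ Set.Ioo (0:ℝ) 1) (ha : 0 ≤ a) (hab : a < b)
    (hsub : Set.Icc a b ⊆ Set.Ioo c d)
    (f f' : ℝ → ℝ)
    (hdiff : ∀ x ∈ Set.Ioo c d, HasDerivAt f (f' x) x)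
    (hsconv : ∀ u ∈ Set.Icc a b, ∀ v ∈ Set.Icc a b, ∀ t ∈ Set.Icc (0:ℝ) 1,
      |f' (t * u + (1 - t) * v)| ≤ t ^ s * |f' u| + (1 - t) ^ s * |f' v|) :
    |(f a + f b) / 2 - (1 / (b - a)) * ∫ x in a..b, f x|
      ≤ ((b - a) / 2) * (1 / (s + 1) + ((1 / 2 : ℝ) ^ s - 2) / ((s + 1) * (s + 2)))
        * (|f' a| + |f' b|) := by
  obtain ⟨hs0, hs1⟩ := hs
  have hba : (0:ℝ) < b - a := by linarith
  have hbane : b - a ≠ 0 := hba.ne'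
  have huIcc : Set.uIcc a b = Set.Icc a b := Set.uIcc_of_le hab.le
  set A := |f' a| with hA
  set B := |f' b| with hB
  set K := ((1/2:ℝ) ^ s + s) / ((s+1)*(s+2)) with hK
  -- pointwise s-convexity bound
  have hpt : ∀ x ∈ Set.Icc a b,
      |f' x| ≤ ((b-x)/(b-a))^s * A + ((x-a)/(b-a))^s * B := by
    intro x hx
    have ht0 : 0 ≤ (b-x)/(b-a) := div_nonneg (by linarith [hx.2]) hba.le
    have ht1 : (b-x)/(b-a) ≤ 1 := (div_le_one hba).2 (by linarith [hx.1])
    have h1t : 1 - (b-x)/(b-a) = (x-a)/(b-a) := by field_simp; try ring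
    have hxeq : (b-x)/(b-a) * a + (1 - (b-x)/(b-a)) * b = x := by field_simp; try ring
    have := hsconv a (Set.left_mem_Icc.2 hab.le) b (Set.right_mem_Icc.2 hab.le)
      ((b-x)/(b-a)) ⟨ht0, ht1⟩
    rw [hxeq, h1t] at this
    exact this
  have hAB : ∀ x ∈ Set.Icc a b, |f' x| ≤ A + B := by
    intro x hx
    refine (hpt x hx).trans ?_
    have ht0 : 0 ≤ (b-x)/(b-a) := div_nonneg (by linarith [hx.2]) hba.le
    have ht1 : (b-x)/(b-a) ≤ 1 := (div_le_one hba).2 (by linarith [hx.1])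
    have ht0' : 0 ≤ (x-a)/(b-a) := div_nonneg (by linarith [hx.1]) hba.le
    have ht1' : (x-a)/(b-a) ≤ 1 := (div_le_one hba).2 (by linarith [hx.2])
    have e1 : ((b-x)/(b-a))^s ≤ 1 := Real.rpow_le_one ht0 ht1 hs0.le
    have e2 : ((x-a)/(b-a))^s ≤ 1 := Real.rpow_le_one ht0' ht1' hs0.le
    have := mul_le_mul_of_nonneg_right e1 (abs_nonneg (f' a))
    have := mul_le_mul_of_nonneg_right e2 (abs_nonneg (f' b))
    simp only [one_mul] at *
    exact add_le_add ‹((b-x)/(b-a))^s * A ≤ A› ‹((x-a)/(b-a))^s * B ≤ B›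
  -- integrability of f'
  have heq : Set.EqOn f' (deriv f) (Set.Ioc a b) := fun x hx =>
    ((hdiff x (hsub (Set.Ioc_subset_Icc_self hx))).deriv).symm
  have hf'i : IntervalIntegrable f' MeasureTheory.volume a b := by
    rw [intervalIntegrable_iff_integrableOn_Ioc_of_le hab.le,
      MeasureTheory.integrableOn_congr_fun heq measurableSet_Ioc]
    apply MeasureTheory.Measure.integrableOn_of_bounded (M := A + B)
      measure_Ioc_lt_top.ne (measurable_deriv f).aestronglyMeasurable
    refine MeasureTheory.ae_restrict_of_forall_mem measurableSet_Ioc fun x hx => ?_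
    rw [Real.norm_eq_abs, ← heq hx]
    exact hAB x (Set.Ioc_subset_Icc_self hx)
  -- integrability of f
  have hfi : IntervalIntegrable f MeasureTheory.volume a b := by
    apply ContinuousOn.intervalIntegrable
    rw [huIcc]
    exact fun x hx => ((hdiff x (hsub hx)).continuousAt).continuousWithinAt
  -- integration by parts
  have hparts : ∫ x in a..b, (x - (a+b)/2) * f' x
      = (b - (a+b)/2) * f b - (a - (a+b)/2) * f a - ∫ x in a..b, 1 * f x :=
    intervalIntegral.integral_mul_deriv_eq_deriv_mul
      (fun x _ => (hasDerivAt_id x).sub_const ((a+b)/2))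
      (fun x hx => hdiff x (hsub (huIcc ▸ hx)))
      intervalIntegrable_const hf'i
  have hone : ∫ x in a..b, 1 * f x = ∫ x in a..b, f x := by simp
  rw [hone] at hparts
  have hid : (f a + f b) / 2 - (1 / (b - a)) * ∫ x in a..b, f x
      = (1/(b-a)) * ∫ x in a..b, (x - (a+b)/2) * f' x := by
    rw [hparts]; field_simp; try ring
  -- the comparison function
  set g : ℝ → ℝ := fun x => |x - (a+b)/2| * (((b-x)/(b-a))^s * A + ((x-a)/(b-a))^s * B)
    with hgdef
  have hrpow1 : Continuous fun x : ℝ => ((b-x)/(b-a))^s :=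
    continuous_iff_continuousAt.2 fun x =>
      (((continuous_const.sub continuous_id).div_const _).continuousAt).rpow_const
        (Or.inr hs0.le)
  have hrpow2 : Continuous fun x : ℝ => ((x-a)/(b-a))^s :=
    continuous_iff_continuousAt.2 fun x =>
      (((continuous_id.sub continuous_const).div_const _).continuousAt).rpow_const
        (Or.inr hs0.le)
  have hgc : Continuous g :=
    ((continuous_id.sub continuous_const).abs).mul
      ((hrpow1.mul continuous_const).add (hrpow2.mul continuous_const))
  have hgi : IntervalIntegrable g MeasureTheory.volume a b :=
    hgc.intervalIntegrable a b
  -- bound the integral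
  have hbnd : |∫ x in a..b, (x - (a+b)/2) * f' x| ≤ |∫ x in a..b, g x| := by
    have hae : ∀ᵐ t ∂MeasureTheory.volume.restrict (Set.uIoc a b),
        ‖(t - (a+b)/2) * f' t‖ ≤ g t := by
      refine MeasureTheory.ae_restrict_of_forall_mem measurableSet_uIoc fun x hx => ?_
      rw [Set.uIoc_of_le hab.le] at hx
      rw [Real.norm_eq_abs, abs_mul]
      exact mul_le_mul_of_nonneg_left (hpt x (Set.Ioc_subset_Icc_self hx)) (abs_nonneg _)
    have := intervalIntegral.norm_integral_le_of_norm_le hab.le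
      (by rw [Set.uIoc_of_le hab.le] at hae; exact (MeasureTheory.ae_restrict_iff' measurableSet_Ioc).1 hae) hgi
    rw [Real.norm_eq_abs] at this
    exact this.trans (le_abs_self _)
  -- compute the integral of g
  set h : ℝ → ℝ := fun t => |1 - 2*t| * ((1-t)^s * A + t^s * B) with hhdef
  have hgh : ∀ x : ℝ, g x = ((b-a)/2) * h ((1/(b-a)) * x + (-a/(b-a))) := by
    intro x
    have e2 : (1/(b-a))*x + (-a/(b-a)) = (x-a)/(b-a) := by field_simp; try ring
    have e1 : (1:ℝ) - (x-a)/(b-a) = (b-x)/(b-a) := by field_simp; ring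
    have e3 : (1:ℝ) - 2*((x-a)/(b-a)) = (a+b-2*x)/(b-a) := by field_simp; try ring
    have e4 : |x - (a+b)/2| = |a+b-2*x|/2 := by
      rw [show x - (a+b)/2 = -((a+b-2*x)/2) by ring, abs_neg, abs_div]
      norm_num
    show g x = ((b-a)/2) * (|1 - 2*((1/(b-a))*x + (-a/(b-a)))|
      * ((1 - ((1/(b-a))*x + (-a/(b-a))))^s * A + ((1/(b-a))*x + (-a/(b-a)))^s * B))
    rw [e2, e1, e3, abs_div, abs_of_pos hba, hgdef]
    simp only
    rw [e4]
    field_simp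
  have hcomp : ∫ x in a..b, h ((1/(b-a)) * x + (-a/(b-a)))
      = (b-a) * ∫ t in (0:ℝ)..1, h t := by
    rw [intervalIntegral.integral_comp_mul_add h (by positivity : (1:ℝ)/(b-a) ≠ 0)]
    rw [show (1/(b-a))*a + (-a/(b-a)) = 0 by field_simp; ring,
      show (1/(b-a))*b + (-a/(b-a)) = 1 by field_simp; try ring]
    rw [smul_eq_mul, one_div, inv_inv]
  have hch1 : Continuous fun t : ℝ => (1-t)^s :=
    continuous_iff_continuousAt.2 fun x =>
      ((continuous_const.sub continuous_id).continuousAt).rpow_const (Or.inr hs0.le)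
  have hch2 : Continuous fun t : ℝ => t^s :=
    continuous_iff_continuousAt.2 fun x =>
      continuous_id.continuousAt.rpow_const (Or.inr hs0.le)
  have habs : Continuous fun t : ℝ => |1 - 2*t| :=
    (continuous_const.sub (continuous_const.mul continuous_id)).abs
  have hint01 : ∫ t in (0:ℝ)..1, h t = K * (A + B) := by
    have hsplit : ∀ t : ℝ, h t = (|1-2*t| * (1-t)^s) * A + (|1-2*t| * t^s) * B := by
      intro t; simp only [hhdef]; ring
    simp only [hsplit]
    have hI1 : IntervalIntegrable (fun t : ℝ => |1-2*t| * (1-t)^s * A) MeasureTheory.volume 0 1 :=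
      ((habs.mul hch1).mul continuous_const).intervalIntegrable 0 1
    have hI2 : IntervalIntegrable (fun t : ℝ => |1-2*t| * t^s * B) MeasureTheory.volume 0 1 :=
      ((habs.mul hch2).mul continuous_const).intervalIntegrable 0 1
    rw [intervalIntegral.integral_add hI1 hI2,
      intervalIntegral.integral_mul_const, intervalIntegral.integral_mul_const,
      key_int s hs0, key_int' s hs0, hK]
    ring
  have hgval : ∫ x in a..b, g x = ((b-a)/2) * ((b-a) * (K * (A+B))) := by
    calc ∫ x in a..b, g x = ∫ x in a..b, ((b-a)/2) * h ((1/(b-a)) * x + (-a/(b-a))) := by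
          apply intervalIntegral.integral_congr; intro x _; exact hgh x
      _ = ((b-a)/2) * ∫ x in a..b, h ((1/(b-a)) * x + (-a/(b-a))) :=
          intervalIntegral.integral_const_mul _ _
      _ = ((b-a)/2) * ((b-a) * (K * (A+B))) := by rw [hcomp, hint01]
  have hKpos : 0 < K := by
    have : (0:ℝ) < (1/2:ℝ)^s := Real.rpow_pos_of_pos (by norm_num) s
    apply div_pos (by linarith) (by nlinarith)
  have hABnn : 0 ≤ A + B := add_nonneg (abs_nonneg _) (abs_nonneg _)
  have hgabs : |∫ x in a..b, g x| = ((b-a)/2) * ((b-a) * (K * (A+B))) := by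
    rw [hgval, abs_of_nonneg]; positivity
  -- final assembly
  have hconst : 1 / (s + 1) + ((1 / 2 : ℝ) ^ s - 2) / ((s + 1) * (s + 2)) = K := by
    rw [hK]; field_simp; try ring
  rw [hid, abs_mul, abs_of_pos (by positivity : (0:ℝ) < 1/(b-a)), hconst]
  calc (1/(b-a)) * |∫ x in a..b, (x - (a+b)/2) * f' x|
      ≤ (1/(b-a)) * |∫ x in a..b, g x| := by
        apply mul_le_mul_of_nonneg_left hbnd (by positivity)
    _ = ((b-a)/2) * K * (A + B) := by rw [hgabs]; field_simp; try ring
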